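/- The positive root χ of Butman's quartic χ⁴ − χ² − (κ/K_W)(χ + |c|)² = 0 is a strictly increasing function of κ > 0, for fixed K_W > 0 and |c| ≤ 1. -/

import Mathlib

set_option linter.unusedVariables false in
lemma butman_mono_aux (a b c₀ : ℝ) (ha : 1 < a) (hab : a ≤ b)
    (hc0 : 0 ≤ c₀) (hc1 : c₀ ≤ 1) :
    (a^4 - a^2) * (b + c₀)^2 ≤ (b^4 - b^2) * (a + c₀)^2 := by
  have hb : 1 < b := ha.trans_le hab
  have ha0 : 0 < a := lt_trans one_pos ha
  have hb0 : 0 < b := lt_trans one_pos hb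
  have hD : (b^4 - b^2) * (a + c₀)^2 - (a^4 - a^2) * (b + c₀)^2 =
      (b - a) * (a^2*b^2*(a+b) + 2*a*b*c₀*(a^2+a*b+b^2-1)
        + c₀^2*(a+b)*(a^2+b^2-1)) := by ring
  have h1 : 0 ≤ a^2 + a*b + b^2 - 1 := by nlinarith
  have h2 : 0 ≤ a^2 + b^2 - 1 := by nlinarith
  have hbr : 0 ≤ a^2*b^2*(a+b) + 2*a*b*c₀*(a^2+a*b+b^2-1)
      + c₀^2*(a+b)*(a^2+b^2-1) := by
    have t1 : (0:ℝ) ≤ a^2*b^2*(a+b) := by positivity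
    have t2 : (0:ℝ) ≤ 2*a*b*c₀*(a^2+a*b+b^2-1) :=
      mul_nonneg (by positivity) h1
    have t3 : (0:ℝ) ≤ c₀^2*(a+b)*(a^2+b^2-1) :=
      mul_nonneg (by positivity) h2
    linarith
  nlinarith [mul_nonneg (sub_nonneg.2 hab) hbr]

/-- The positive root of Butman's quartic is strictly increasing in κ. -/
theorem butman_root_strict_mono_in_kappa
    (KW c : ℝ) (hKW : 0 < KW) (hc : |c| ≤ 1)
    (κ₁ κ₂ χ₁ χ₂ : ℝ)
    (hκ₁ : 0 < κ₁) (hκ : κ₁ < κ₂)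
    (hχ₁pos : 0 < χ₁) (hχ₂pos : 0 < χ₂)
    (hroot₁ : χ₁^4 - χ₁^2 - (κ₁ / KW) * (χ₁ + |c|)^2 = 0)
    (hroot₂ : χ₂^4 - χ₂^2 - (κ₂ / KW) * (χ₂ + |c|)^2 = 0) :
    χ₁ < χ₂ := by
  set c₀ := |c| with hc₀
  have hc0 : 0 ≤ c₀ := abs_nonneg c
  have hκ₂ : 0 < κ₂ := hκ₁.trans hκ
  have h1 : KW * (χ₁^4 - χ₁^2) = κ₁ * (χ₁ + c₀)^2 := by
    field_simp at hroot₁; linarith [hroot₁]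
  have h2 : KW * (χ₂^4 - χ₂^2) = κ₂ * (χ₂ + c₀)^2 := by
    field_simp at hroot₂; linarith [hroot₂]
  have hs1 : (0:ℝ) < (χ₁ + c₀)^2 := by positivity
  have hs2 : (0:ℝ) < (χ₂ + c₀)^2 := by positivity
  have hχ₁1 : 1 < χ₁ := by
    have hpos : 0 < χ₁^4 - χ₁^2 := by
      have h := mul_pos hκ₁ hs1
      rw [← h1] at h
      exact (mul_pos_iff_of_pos_left hKW).mp h
    by_contra h
    push_neg at h
    have h2' : χ₁^2 ≤ 1 := by nlinarith
    nlinarith [mul_nonneg (sq_nonneg χ₁) (sub_nonneg.2 h2')]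
  have hχ₂1 : 1 < χ₂ := by
    have hpos : 0 < χ₂^4 - χ₂^2 := by
      have h := mul_pos hκ₂ hs2
      rw [← h2] at h
      exact (mul_pos_iff_of_pos_left hKW).mp h
    by_contra h
    push_neg at h
    have h2' : χ₂^2 ≤ 1 := by nlinarith
    nlinarith [mul_nonneg (sq_nonneg χ₂) (sub_nonneg.2 h2')]
  by_contra hle
  push_neg at hle
  have key := butman_mono_aux χ₂ χ₁ c₀ hχ₂1 hle hc0 hc
  have hKWkey := mul_le_mul_of_nonneg_left key hKW.le
  have hprod : 0 < (χ₁ + c₀)^2 * (χ₂ + c₀)^2 := mul_pos hs1 hs2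
  have hfin : κ₂ * ((χ₁ + c₀)^2 * (χ₂ + c₀)^2) ≤ κ₁ * ((χ₁ + c₀)^2 * (χ₂ + c₀)^2) := by
    calc κ₂ * ((χ₁ + c₀)^2 * (χ₂ + c₀)^2)
        = KW * ((χ₂^4 - χ₂^2) * (χ₁ + c₀)^2) := by
          linear_combination -(χ₁ + c₀)^2 * h2
      _ ≤ KW * ((χ₁^4 - χ₁^2) * (χ₂ + c₀)^2) := hKWkey
      _ = κ₁ * ((χ₁ + c₀)^2 * (χ₂ + c₀)^2) := by
          linear_combination (χ₂ + c₀)^2 * h1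
  exact absurd (le_of_mul_le_mul_right hfin hprod) (not_le.2 hκ)
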